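/- arXiv:0902.4867 — 3 statements merged into one kernel-verified Lean document; each statement's English description precedes it below -/
import Mathlib

section
/- Let G be a finite group with |G| invertible modulo ℓ, R = R(G) its complex representation ring, and ε : R → 𝔽_ℓ the mod-ℓ dimension augmentation. Then Tor_n^R(𝔽_ℓ, ℤ) = 0 for all n > 0, where ℤ is an R-module via the dimension augmentation R → ℤ. -/
open CategoryTheory

/-- The complex representation ring of a group `G`, realized as the ring of virtual
characters: the subring of `G → ℂ` generated by characters of finite-dimensional complex
representations. -/
def RepRing (G : Type) [Group G] : Subring (G → ℂ) :=
  Subring.closure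
    {χ | ∃ (n : ℕ) (ρ : G →* GL (Fin n) ℂ),
      χ = fun g => Matrix.trace (ρ g : Matrix (Fin n) (Fin n) ℂ)}

open CategoryTheory.Limits CategoryTheory.MonoidalCategory

section TorVanishing

/-- General Tor-vanishing lemma: if `R` is a commutative ring, `ε : R → ℤ` a ring hom,
`χ ∈ R` with `r * χ = ε r • χ` for all `r` and `ε χ = N`, and `ℓ` is coprime to `N`,
then `Tor_n^R(ℤ/ℓ, ℤ) = 0` for `n > 0`. -/
theorem tor_vanish_aux (R : Type) [CommRing R] (ε : R →+* ℤ) (N ℓ : ℕ) (χ : R)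
    (hχ : ∀ r : R, r * χ = (ε r) • χ) (hεχ : ε χ = (N : ℤ))
    (hcop : Nat.Coprime ℓ N) (n : ℕ) (hn : 0 < n) :
    letI : Module R ℤ := Module.compHom ℤ ε
    letI : Module R (ZMod ℓ) :=
      Module.compHom (ZMod ℓ) ((Int.castRingHom (ZMod ℓ)).comp ε)
    Subsingleton
      (((Tor (ModuleCat R) n).obj (ModuleCat.of R (ZMod ℓ))).obj
        (ModuleCat.of R ℤ)) := by
  letI : Module R ℤ := Module.compHom ℤ ε
  letI : Module R (ZMod ℓ) :=
    Module.compHom (ZMod ℓ) ((Int.castRingHom (ZMod ℓ)).comp ε)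
  obtain ⟨m, rfl⟩ : ∃ m, n = m + 1 := ⟨n - 1, (Nat.succ_pred_eq_of_pos hn).symm⟩
  set C := ModuleCat R with hCdef
  set X : C := ModuleCat.of R (ZMod ℓ) with hXdef
  set Y : C := ModuleCat.of R ℤ with hYdef
  set F : C ⥤ C := (tensoringLeft C).obj X with hFdef
  -- Bezout coefficients
  set A : ℤ := Int.gcdA ℓ N with hAdef
  set B : ℤ := Int.gcdB ℓ N with hBdef
  have hb : (ℓ : ℤ) * A + (N : ℤ) * B = 1 := by
    have h := Int.gcd_eq_gcd_ab (ℓ : ℤ) (N : ℤ)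
    rw [Int.gcd_natCast_natCast, hcop.gcd_eq_one] at h
    exact_mod_cast h.symm
  -- the morphisms u, v factoring N • 𝟙 Y through the free module R
  let u₀ : ℤ →ₗ[R] R :=
    { toFun := fun z => z • χ
      map_add' := fun x y => add_smul x y χ
      map_smul' := fun r z => by
        show (ε r * z) • χ = r * (z • χ)
        rw [mul_smul_comm, hχ, smul_smul, mul_comm] }
  let v₀ : R →ₗ[R] ℤ :=
    { toFun := fun s => ε s
      map_add' := fun x y => ε.map_add x y
      map_smul' := fun r s => by
        show ε (r * s) = ε r * ε s
        exact ε.map_mul r s }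
  let u : Y ⟶ ModuleCat.of R R := ModuleCat.ofHom u₀
  let v : ModuleCat.of R R ⟶ Y := ModuleCat.ofHom v₀
  have huv : u ≫ v = (N : ℤ) • 𝟙 Y := by
    refine ModuleCat.hom_ext (LinearMap.ext fun (z : ℤ) => ?_)
    show ε (z • χ) = (N : ℤ) • z
    rw [map_zsmul, hεχ, smul_eq_mul, smul_eq_mul, mul_comm]
  haveI : Projective (ModuleCat.of R R) :=
    (IsProjective.iff_projective (R := R) R).mp inferInstance
  -- Step 1: (L F).map (N • 𝟙 Y) = 0 since it factors through a projective
  have hzero := Functor.isZero_leftDerived_obj_projective_succ F m (ModuleCat.of R R)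
  have h1 : (F.leftDerived (m + 1)).map ((N : ℤ) • 𝟙 Y) = 0 := by
    rw [← huv, (F.leftDerived (m + 1)).map_comp,
      hzero.eq_zero_of_tgt ((F.leftDerived (m + 1)).map u), zero_comp]
  -- projective resolution of Y
  let P : ProjectiveResolution Y := (HasProjectiveResolution.out (Z := Y)).some
  let gN : P.complex ⟶ P.complex := ProjectiveResolution.lift ((N : ℤ) • 𝟙 Y) P P
  have hgN := ProjectiveResolution.lift_commutes ((N : ℤ) • 𝟙 Y) P P
  have h3 := F.leftDerived_map_eq (m + 1) ((N : ℤ) • 𝟙 Y) gN hgN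
  have h2 : (F.mapHomologicalComplex _ ⋙
      HomologicalComplex.homologyFunctor _ _ (m + 1)).map gN = 0 := by
    have heq : (P.isoLeftDerivedObj F (m + 1)).inv ≫
        (F.leftDerived (m + 1)).map ((N : ℤ) • 𝟙 Y) ≫
        (P.isoLeftDerivedObj F (m + 1)).hom =
        (F.mapHomologicalComplex _ ⋙
          HomologicalComplex.homologyFunctor _ _ (m + 1)).map gN := by
      rw [h3]
      simp only [Category.assoc, Iso.inv_hom_id_assoc, Iso.inv_hom_id, Category.comp_id]
    rw [← heq, h1, zero_comp, comp_zero]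
  -- Step 2: elements of X ⊗ M are ℓ-torsion
  have htor : ∀ (M : ModuleCat R) (x : (F.obj M)), (ℓ : ℤ) • x = 0 := by
    intro M x
    have key : ∀ t : TensorProduct R (ZMod ℓ) M, (ℓ : ℤ) • t = 0 := by
      intro t
      induction t using TensorProduct.induction_on with
      | zero => simp
      | tmul a mm =>
        have h4 : (ℓ : ℤ) • (a ⊗ₜ[R] mm) = ((ℓ : ℤ) • a) ⊗ₜ[R] mm :=
          (map_zsmul ((TensorProduct.mk R (ZMod ℓ) M).flip mm) (ℓ : ℤ) a).symm
        have ha : (ℓ : ℤ) • a = 0 := by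
          rw [zsmul_eq_mul]
          simp
        rw [h4, ha, TensorProduct.zero_tmul]
      | add s t hs ht => rw [smul_add, hs, ht, add_zero]
    exact key x
  have hgl : (F.mapHomologicalComplex (ComplexShape.down ℕ)).map
      ((ℓ : ℤ) • 𝟙 P.complex) = 0 := by
    apply HomologicalComplex.hom_ext
    intro i
    rw [Functor.mapHomologicalComplex_map_f, HomologicalComplex.zero_f]
    have hfi : ((ℓ : ℤ) • 𝟙 P.complex).f i = (ℓ : ℤ) • 𝟙 (P.complex.X i) := rfl
    rw [hfi, Functor.map_zsmul, CategoryTheory.Functor.map_id]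
    exact ModuleCat.hom_ext (LinearMap.ext fun x => htor _ x)
  have hHgl : (F.mapHomologicalComplex _ ⋙
      HomologicalComplex.homologyFunctor _ _ (m + 1)).map ((ℓ : ℤ) • 𝟙 P.complex) = 0 := by
    show (HomologicalComplex.homologyFunctor C (ComplexShape.down ℕ) (m + 1)).map
      ((F.mapHomologicalComplex (ComplexShape.down ℕ)).map ((ℓ : ℤ) • 𝟙 P.complex)) = 0
    rw [hgl, CategoryTheory.Functor.map_zero]
  -- Step 3: combine via Bezout
  let g : P.complex ⟶ P.complex := A • ((ℓ : ℤ) • 𝟙 P.complex) + B • gN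
  have hsingle : (ChainComplex.single₀ C).map ((N : ℤ) • 𝟙 Y) =
      (N : ℤ) • 𝟙 ((ChainComplex.single₀ C).obj Y) := by
    rw [Functor.map_zsmul, CategoryTheory.Functor.map_id]
  have hw : g ≫ P.π = P.π ≫ (ChainComplex.single₀ C).map (𝟙 Y) := by
    rw [CategoryTheory.Functor.map_id, Category.comp_id]
    show (A • ((ℓ : ℤ) • 𝟙 P.complex) + B • gN) ≫ P.π = P.π
    simp only [Preadditive.add_comp, Preadditive.zsmul_comp, Category.id_comp, gN, hgN, hsingle,
      Preadditive.comp_zsmul, Category.comp_id]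
    rw [smul_smul, smul_smul, ← add_smul]
    have hco : A * (ℓ : ℤ) + B * (N : ℤ) = 1 := by
      rw [mul_comm A, mul_comm B]; exact hb
    rw [hco, one_smul]
  have h5 := F.leftDerived_map_eq (m + 1) (𝟙 Y) g hw
  have h6 : (F.mapHomologicalComplex _ ⋙
      HomologicalComplex.homologyFunctor _ _ (m + 1)).map g = 0 := by
    show (F.mapHomologicalComplex _ ⋙
      HomologicalComplex.homologyFunctor _ _ (m + 1)).map
        (A • ((ℓ : ℤ) • 𝟙 P.complex) + B • gN) = 0
    rw [Functor.map_zsmul] at hHgl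
    simp only [CategoryTheory.Functor.map_add, Functor.map_zsmul]
    rw [hHgl, h2, smul_zero, smul_zero, add_zero]
  have key : 𝟙 (((Tor C (m + 1)).obj X).obj Y) = 0 := by
    show 𝟙 ((F.leftDerived (m + 1)).obj Y) = 0
    rw [← (F.leftDerived (m + 1)).map_id, h5, h6, zero_comp, comp_zero]
  have h0 : ∀ x : (((Tor C (m + 1)).obj X).obj Y), x = 0 := by
    intro x
    calc x = (𝟙 (((Tor C (m + 1)).obj X).obj Y)) x := rfl
    _ = (0 : ((Tor C (m + 1)).obj X).obj Y ⟶ ((Tor C (m + 1)).obj X).obj Y) x := by rw [key]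
    _ = 0 := rfl
  exact ⟨fun a b => by rw [h0 a, h0 b]⟩

end TorVanishing

section RegularCharacter

variable (G : Type) [Group G] [Finite G]

/-- An equivalence of `G` with `Fin (Nat.card G)`. -/
noncomputable def regEquiv : G ≃ Fin (Nat.card G) := Finite.equivFin G

/-- The permutation of `Fin (Nat.card G)` induced by left multiplication by `g`. -/
noncomputable def regPerm (g : G) : Equiv.Perm (Fin (Nat.card G)) :=
  ((regEquiv G).symm.trans (Equiv.mulLeft g)).trans (regEquiv G)

lemma regPerm_one : regPerm G (1 : G)⁻¹ = Equiv.refl _ := by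
  ext x
  simp [regPerm, Equiv.coe_mulLeft]

/-- The regular representation of `G` by permutation matrices. -/
noncomputable def regMatrixHom : G →* Matrix (Fin (Nat.card G)) (Fin (Nat.card G)) ℂ where
  toFun g := (regPerm G g⁻¹).permMatrix ℂ
  map_one' := by
    show (regPerm G (1 : G)⁻¹).permMatrix ℂ = 1
    rw [regPerm_one]
    show (Equiv.refl _).toPEquiv.toMatrix = 1
    rw [Equiv.toPEquiv_refl, PEquiv.toMatrix_refl]
  map_mul' g h := by
    have h1 : regPerm G (g * h)⁻¹ = (regPerm G g⁻¹).trans (regPerm G h⁻¹) := by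
      ext x
      simp [regPerm, Equiv.coe_mulLeft, mul_assoc]
    show (regPerm G (g * h)⁻¹).permMatrix ℂ = _ * _
    rw [h1]
    show ((regPerm G g⁻¹).trans (regPerm G h⁻¹)).toPEquiv.toMatrix = _
    rw [Equiv.toPEquiv_trans, PEquiv.toMatrix_trans]

/-- The regular representation as a homomorphism into `GL`. -/
noncomputable def regRep : G →* GL (Fin (Nat.card G)) ℂ :=
  (regMatrixHom G).toHomUnits

/-- The character of the regular representation, as an element of the representation
ring. -/
noncomputable def regChar : RepRing G :=
  ⟨fun g => Matrix.trace ((regRep G g : Matrix (Fin (Nat.card G)) (Fin (Nat.card G)) ℂ)),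
   Subring.subset_closure ⟨Nat.card G, regRep G, rfl⟩⟩

lemma regChar_val (g : G) :
    (regChar G : G → ℂ) g = Matrix.trace ((regPerm G g⁻¹).permMatrix ℂ) := by
  show Matrix.trace
      (((regMatrixHom G).toHomUnits g :
        Matrix (Fin (Nat.card G)) (Fin (Nat.card G)) ℂ)) = _
  rw [MonoidHom.coe_toHomUnits]
  rfl

lemma regChar_one : (regChar G : G → ℂ) 1 = (Nat.card G : ℂ) := by
  rw [regChar_val, regPerm_one]
  show Matrix.trace ((Equiv.refl (Fin (Nat.card G))).toPEquiv.toMatrix) = _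
  rw [Equiv.toPEquiv_refl, PEquiv.toMatrix_refl, Matrix.trace_one]
  simp

lemma regChar_ne {g : G} (h : g ≠ 1) : (regChar G : G → ℂ) g = 0 := by
  rw [regChar_val, Matrix.trace_permutation]
  have hfix : Function.fixedPoints (regPerm G g⁻¹) = ∅ := by
    ext x
    simp only [Function.mem_fixedPoints, Set.mem_empty_iff_false, iff_false]
    intro hx
    apply h
    have hx' : g⁻¹ * (regEquiv G).symm x = (regEquiv G).symm x := by
      have h3 := congrArg (regEquiv G).symm hx
      simpa [regPerm, Equiv.coe_mulLeft] using h3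
    have h4 : g⁻¹ = 1 := by
      have h2 : g⁻¹ * (regEquiv G).symm x = 1 * (regEquiv G).symm x := by
        rw [hx', one_mul]
      exact mul_right_cancel h2
    rw [← inv_inv g, h4, inv_one]
  rw [hfix]
  simp

end RegularCharacter

/-- Let `G` be a finite group with `|G|` invertible mod `ℓ`, `R = R(G)` its representation
ring, `ε : R → ℤ` the dimension augmentation (evaluation of a virtual character at `1`),
and `𝔽_ℓ = ℤ/ℓ` the mod-`ℓ` augmentation module.  Then `Tor_n^R(𝔽_ℓ, ℤ) = 0` for `n > 0`. -/
theorem stmt_8 (G : Type) [Group G] [Finite G] (ℓ : ℕ) (hℓ : ℓ.Prime)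
    (hord : ¬ ℓ ∣ Nat.card G)
    (ε : RepRing G →+* ℤ) (hε : ∀ χ : RepRing G, ((ε χ : ℂ)) = (χ : G → ℂ) 1)
    (n : ℕ) (hn : 0 < n) :
    letI : Module (RepRing G) ℤ := Module.compHom ℤ ε
    letI : Module (RepRing G) (ZMod ℓ) :=
      Module.compHom (ZMod ℓ) ((Int.castRingHom (ZMod ℓ)).comp ε)
    Subsingleton
      (((Tor (ModuleCat (RepRing G)) n).obj (ModuleCat.of (RepRing G) (ZMod ℓ))).obj
        (ModuleCat.of (RepRing G) ℤ)) := by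
  classical
  have hcop : Nat.Coprime ℓ (Nat.card G) := (hℓ.coprime_iff_not_dvd).mpr hord
  have hkey : ∀ r : RepRing G, r * regChar G = (ε r) • regChar G := by
    intro r
    apply Subtype.ext
    funext g
    show (r : G → ℂ) g * (regChar G : G → ℂ) g =
      ((ε r • regChar G : RepRing G) : G → ℂ) g
    have hs : ((ε r • regChar G : RepRing G) : G → ℂ) g =
        ((ε r : ℤ) : ℂ) * (regChar G : G → ℂ) g := by
      show (ε r : ℤ) • ((regChar G : G → ℂ) g) = _
      rw [zsmul_eq_mul]
    rw [hs]
    by_cases h : g = 1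
    · subst h
      rw [regChar_one, ← hε r]
    · rw [regChar_ne G h, mul_zero, mul_zero]
  have hEchi : ε (regChar G) = (Nat.card G : ℤ) := by
    have h1 := hε (regChar G)
    rw [regChar_one] at h1
    exact_mod_cast h1
  exact tor_vanish_aux (RepRing G) ε (Nat.card G) ℓ (regChar G) hkey hEchi hcop n hn
end

section
/- In the representation ring of the integer Heisenberg group H, if ζ and ζ' are roots of unity of coprime orders, then the irreducible representations V_ζ and V_{ζ'} satisfy V_ζ ⊗ V_{ζ'} ≅ V_{ζζ'}; in particular dim V_ζ = |ζ| (the order of ζ), and dim(V_ζ ⊗ V_{ζ'}) = |ζ|·|ζ'| = |ζζ'| = dim V_{ζζ'}. -/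
open scoped TensorProduct

/-- The integer Heisenberg group `⟨x,y,z | [x,z]=[y,z]=1, [x,y]=z⟩`, realized as `ℤ³`
with the multiplication of upper-triangular unipotent `3×3` integral matrices. -/
@[ext]
structure Heis where
  a : ℤ
  b : ℤ
  c : ℤ

instance : Mul Heis := ⟨fun g h => ⟨g.a + h.a, g.b + h.b, g.c + h.c + g.a * h.b⟩⟩
instance : One Heis := ⟨⟨0, 0, 0⟩⟩
instance : Inv Heis := ⟨fun g => ⟨-g.a, -g.b, -g.c + g.a * g.b⟩⟩

@[simp] lemma Heis.mul_a (g h : Heis) : (g * h).a = g.a + h.a := rfl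
@[simp] lemma Heis.mul_b (g h : Heis) : (g * h).b = g.b + h.b := rfl
@[simp] lemma Heis.mul_c (g h : Heis) : (g * h).c = g.c + h.c + g.a * h.b := rfl
@[simp] lemma Heis.one_a : (1 : Heis).a = 0 := rfl
@[simp] lemma Heis.one_b : (1 : Heis).b = 0 := rfl
@[simp] lemma Heis.one_c : (1 : Heis).c = 0 := rfl
@[simp] lemma Heis.inv_a (g : Heis) : g⁻¹.a = -g.a := rfl
@[simp] lemma Heis.inv_b (g : Heis) : g⁻¹.b = -g.b := rfl
@[simp] lemma Heis.inv_c (g : Heis) : g⁻¹.c = -g.c + g.a * g.b := rfl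

instance : Group Heis where
  mul_assoc g h k := by ext <;> simp <;> ring
  one_mul g := by ext <;> simp
  mul_one g := by ext <;> simp
  inv_mul_cancel g := by ext <;> simp

/-- The generator `x`. -/
def Heis.x : Heis := ⟨1, 0, 0⟩
/-- The generator `y`. -/
def Heis.y : Heis := ⟨0, 1, 0⟩
/-- The central generator `z = [x,y]`. -/
def Heis.z : Heis := ⟨0, 0, 1⟩

/-- A representation is irreducible: it has no proper nonzero invariant subspace. -/
def IsIrred {V : Type*} [AddCommGroup V] [Module ℂ V] (ρ : Representation ℂ Heis V) : Prop :=
  ∀ p : Submodule ℂ V, (∀ (g : Heis), ∀ v ∈ p, ρ g v ∈ p) → p = ⊥ ∨ p = ⊤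
open Module

namespace HeisAux

lemma yx_rel : Heis.y * Heis.x = Heis.x * Heis.y * Heis.z⁻¹ := by
  ext <;> simp [Heis.x, Heis.y, Heis.z]

lemma rho_z_inv {V : Type} [AddCommGroup V] [Module ℂ V] (ρ : Representation ℂ Heis V)
    (u : ℂˣ) (hz : ρ Heis.z = (u : ℂ) • (1 : Module.End ℂ V)) :
    ρ Heis.z⁻¹ = ((u⁻¹ : ℂˣ) : ℂ) • (1 : Module.End ℂ V) := by
  have h1 : ρ Heis.z⁻¹ * ρ Heis.z = 1 := by
    rw [← map_mul, inv_mul_cancel, map_one]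
  rw [hz, mul_smul_comm, mul_one] at h1
  have : ((u⁻¹ : ℂˣ) : ℂ) • ((u : ℂ) • ρ Heis.z⁻¹) = ((u⁻¹ : ℂˣ) : ℂ) • (1 : Module.End ℂ V) :=
    by rw [h1]
  rwa [smul_smul, Units.inv_mul, one_smul] at this

/-- Structure of a rep of `Heis` with central character `ζ`, dimension `orderOf ζ`,
and `1` an eigenvalue of both `x` and `y`. -/
lemma structure_lemma (ζ : ℂˣ) (r : ℕ) (hr : orderOf ζ = r) (hr0 : 0 < r)
    (V : Type) [AddCommGroup V] [Module ℂ V] [FiniteDimensional ℂ V]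
    (ρ : Representation ℂ Heis V)
    (hz : ρ Heis.z = (ζ : ℂ) • (1 : Module.End ℂ V))
    (hdim : Module.finrank ℂ V = r)
    (hx : Module.End.HasEigenvalue (ρ Heis.x) 1)
    (hy : Module.End.HasEigenvalue (ρ Heis.y) 1) :
    ∃ w : Basis (ZMod r) ℂ V,
      (∀ k, ρ Heis.x (w k) = w (k + 1)) ∧
      (∀ k, ρ Heis.y (w k) = (((ζ : ℂ) ^ (ZMod.val k))⁻¹) • w k) := by
  haveI : NeZero r := ⟨hr0.ne'⟩
  have hζr : (ζ : ℂ) ^ r = 1 := by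
    have := pow_orderOf_eq_one ζ
    rw [hr] at this
    rw [← Units.val_pow_eq_pow_val, this, Units.val_one]
  obtain ⟨v, hv⟩ := hy.exists_hasEigenvector
  have hv0 : v ≠ 0 := hv.right
  have hvy : ρ Heis.y v = v := by
    have := hv.apply_eq_smul; rwa [one_smul] at this
  set T : Module.End ℂ V := ρ Heis.x with hT
  -- key commutation
  have hcomm : ∀ u : V, ρ Heis.y (T u) = ((ζ : ℂ))⁻¹ • T (ρ Heis.y u) := by
    intro u
    have h1 : ρ Heis.y (T u) = ρ (Heis.y * Heis.x) u := by
      rw [map_mul]; rfl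
    rw [h1, yx_rel, map_mul, map_mul, rho_z_inv ρ ζ hz]
    simp only [Module.End.mul_apply, LinearMap.smul_apply, Module.End.one_apply,
      map_smul]
    norm_cast
  -- eigen property of T^n v
  have hclaim : ∀ n : ℕ, ρ Heis.y ((T ^ n) v) = (((ζ : ℂ) ^ n)⁻¹) • (T ^ n) v := by
    intro n
    induction n with
    | zero => simpa using hvy
    | succ n ih =>
      rw [pow_succ', Module.End.mul_apply, hcomm, ih, map_smul, smul_smul,
        ← mul_inv, ← pow_succ']
  have hTinj : Function.Injective T := by
    intro a b hab
    have h2 : ρ Heis.x⁻¹ (T a) = ρ Heis.x⁻¹ (T b) := by rw [hab]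
    rw [hT, ← Module.End.mul_apply, ← Module.End.mul_apply (ρ Heis.x⁻¹), ← map_mul,
      inv_mul_cancel, map_one, Module.End.one_apply, Module.End.one_apply] at h2
    exact h2
  have hTn0 : ∀ n : ℕ, (T ^ n) v ≠ 0 := by
    intro n
    induction n with
    | zero => simpa using hv0
    | succ n ih =>
      rw [pow_succ', Module.End.mul_apply]
      intro h
      exact ih (hTinj (by simpa using h))
  -- the family
  set W : ZMod r → V := fun k => (T ^ (ZMod.val k)) v with hW
  have hWeig : ∀ k : ZMod r,
      Module.End.HasEigenvector (ρ Heis.y) (((ζ : ℂ) ^ (ZMod.val k))⁻¹) (W k) := by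
    intro k
    refine ⟨Module.End.mem_eigenspace_iff.2 ?_, hTn0 _⟩
    exact hclaim (ZMod.val k)
  have hμinj : Function.Injective fun k : ZMod r => (((ζ : ℂ) ^ (ZMod.val k))⁻¹) := by
    intro k j h
    simp only [inv_inj] at h
    have h' : ζ ^ (ZMod.val k) = ζ ^ (ZMod.val j) := by
      apply Units.ext
      rw [Units.val_pow_eq_pow_val, Units.val_pow_eq_pow_val]
      exact h
    have hlt : ZMod.val k < orderOf ζ := hr ▸ ZMod.val_lt k
    have hlt' : ZMod.val j < orderOf ζ := hr ▸ ZMod.val_lt j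
    have := pow_injOn_Iio_orderOf (x := ζ) hlt hlt' h'
    exact ZMod.val_injective r this
  have hli : LinearIndependent ℂ W :=
    Module.End.eigenvectors_linearIndependent' (ρ Heis.y) _ hμinj W hWeig
  have hcard : Fintype.card (ZMod r) = Module.finrank ℂ V := by
    rw [hdim, ZMod.card]
  let w : Basis (ZMod r) ℂ V := basisOfLinearIndependentOfCardEqFinrank hli hcard
  have hwW : ∀ k, w k = W k := by
    intro k
    have := coe_basisOfLinearIndependentOfCardEqFinrank hli hcard
    rw [show w = basisOfLinearIndependentOfCardEqFinrank hli hcard from rfl,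
      this]
  -- T^r v is in the 1-eigenspace of y, which is spanned by v = W 0
  have hTr_eig : ρ Heis.y ((T ^ r) v) = (T ^ r) v := by
    have := hclaim r
    rw [hζr] at this
    simpa using this
  -- coefficients of T^r v
  obtain ⟨c, hc⟩ : ∃ c : ℂ, (T ^ r) v = c • v := by
    set u : V := (T ^ r) v with hu
    set d : ZMod r →₀ ℂ := w.repr u with hd
    have hrepr : ∑ k : ZMod r, d k • w k = u := by
      rw [hd]
      exact w.sum_repr u
    have hzero : ∀ k : ZMod r, k ≠ 0 → d k = 0 := by
      intro k hk
      -- apply y to the expansion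
      have h1 : ∑ j : ZMod r, (d j * (((ζ : ℂ) ^ (ZMod.val j))⁻¹)) • w j = u := by
        calc ∑ j : ZMod r, (d j * (((ζ : ℂ) ^ (ZMod.val j))⁻¹)) • w j
            = ρ Heis.y (∑ j : ZMod r, d j • w j) := by
              rw [map_sum]
              refine Finset.sum_congr rfl fun j _ => ?_
              rw [map_smul, hwW, (hWeig j).apply_eq_smul, ← hwW, smul_smul]
          _ = u := by rw [hrepr, hTr_eig]
      have h2 : ∑ j : ZMod r, ((d j * (((ζ : ℂ) ^ (ZMod.val j))⁻¹)) - d j) • w j = 0 := by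
        simp only [sub_smul, Finset.sum_sub_distrib, h1, hrepr, sub_self]
      have h3 := linearIndependent_iff'.1 (w.linearIndependent) Finset.univ _ h2 k
        (Finset.mem_univ k)
      have h4 : d k * (((ζ : ℂ) ^ (ZMod.val k))⁻¹) = d k := sub_eq_zero.1 h3
      by_contra hdk
      have h5 : ((ζ : ℂ) ^ (ZMod.val k))⁻¹ = 1 :=
        mul_left_cancel₀ hdk (h4.trans (mul_one _).symm)
      have h6 : ζ ^ (ZMod.val k) = 1 := by
        apply Units.ext
        rw [Units.val_pow_eq_pow_val]
        rw [inv_eq_one] at h5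
        simpa using h5
      have h7 : orderOf ζ ∣ ZMod.val k := orderOf_dvd_of_pow_eq_one h6
      have h8 : ZMod.val k ≠ 0 := fun h => hk (by
        apply ZMod.val_injective r
        simpa using h)
      have h9 : ZMod.val k < r := ZMod.val_lt k
      rw [hr] at h7
      have := Nat.le_of_dvd (Nat.pos_of_ne_zero h8) h7
      omega
    refine ⟨d 0, ?_⟩
    have : ∑ k : ZMod r, d k • w k = d 0 • w 0 := by
      rw [Finset.sum_eq_single 0]
      · intro b _ hb; rw [hzero b hb, zero_smul]
      · intro h; exact absurd (Finset.mem_univ 0) h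
    rw [← hrepr, this, hwW]
    simp [hW]
  -- T^r = c • 1
  have hTrc : (T ^ r : Module.End ℂ V) = c • 1 := by
    apply w.ext
    intro k
    rw [hwW]
    have : (T ^ r) (W k) = (T ^ (ZMod.val k)) ((T ^ r) v) := by
      rw [hW]
      simp only [← Module.End.mul_apply, ← pow_add]
      rw [add_comm]
    rw [this, hc, map_smul]
    simp [hW]
  -- c = 1 using the eigenvector of x
  have hc1 : c = 1 := by
    obtain ⟨u', hu'⟩ := hx.exists_hasEigenvector
    have hu'0 : u' ≠ 0 := hu'.right
    have hu'x : T u' = u' := by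
      have := hu'.apply_eq_smul; rwa [one_smul] at this
    have hTnu' : ∀ n : ℕ, (T ^ n) u' = u' := by
      intro n
      induction n with
      | zero => simp
      | succ n ih => rw [pow_succ, Module.End.mul_apply, hu'x, ih]
    have := hTnu' r
    rw [hTrc] at this
    simp only [LinearMap.smul_apply, Module.End.one_apply] at this
    by_contra hcne
    exact hu'0 (by
      have h := sub_smul c 1 u'
      rw [this, one_smul, sub_self] at h
      exact (smul_eq_zero.1 h).resolve_left (sub_ne_zero.2 hcne))
  have hTrv : (T ^ r) v = v := by rw [hc, hc1, one_smul]
  -- conclude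
  refine ⟨w, ?_, ?_⟩
  · intro k
    rw [hwW, hwW, hW]
    simp only
    have hadd : ZMod.val (k + 1) = (ZMod.val k + 1 % r) % r := by
      rw [ZMod.val_add, ZMod.val_one_eq_one_mod]
    rcases Nat.lt_or_ge (ZMod.val k + 1) r with hlt | hge
    · have hr2 : 1 < r := by omega
      have hval : ZMod.val (k + 1) = ZMod.val k + 1 := by
        rw [hadd, Nat.mod_eq_of_lt hr2, Nat.mod_eq_of_lt hlt]
      rw [hval, pow_succ', Module.End.mul_apply]
    · have hvk : ZMod.val k = r - 1 := by have := ZMod.val_lt k; omega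
      have hk1 : ZMod.val (k + 1) = 0 := by
        rcases eq_or_lt_of_le (show 1 ≤ r from hr0) with h1 | h1
        · have h1' : r = 1 := h1.symm
          subst h1'
          rw [hadd]
          simp [Nat.mod_one]
        · rw [hadd, Nat.mod_eq_of_lt h1, hvk]
          have h2 : r - 1 + 1 = r := by omega
          rw [h2, Nat.mod_self]
      rw [hk1, pow_zero, Module.End.one_apply]
      have : T ((T ^ (ZMod.val k)) v) = (T ^ (ZMod.val k + 1)) v := by
        rw [pow_succ', Module.End.mul_apply]
      rw [this, hvk]
      have : r - 1 + 1 = r := by omega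
      rw [this, hTrv]
  · intro k
    rw [hwW]
    exact (hWeig k).apply_eq_smul

end HeisAux

namespace HeisAux

lemma x_npow (n : ℕ) : Heis.x ^ n = ⟨(n : ℤ), 0, 0⟩ := by
  induction n with
  | zero => rfl
  | succ n ih => rw [pow_succ, ih]; ext <;> simp [Heis.x] <;> push_cast <;> ring

lemma y_npow (n : ℕ) : Heis.y ^ n = ⟨0, (n : ℤ), 0⟩ := by
  induction n with
  | zero => rfl
  | succ n ih => rw [pow_succ, ih]; ext <;> simp [Heis.y] <;> push_cast <;> ring

lemma z_npow (n : ℕ) : Heis.z ^ n = ⟨0, 0, (n : ℤ)⟩ := by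
  induction n with
  | zero => rfl
  | succ n ih => rw [pow_succ, ih]; ext <;> simp [Heis.z] <;> push_cast <;> ring

lemma x_zpow (n : ℤ) : Heis.x ^ n = ⟨n, 0, 0⟩ := by
  cases n with
  | ofNat m => rw [Int.ofNat_eq_natCast, zpow_natCast, x_npow]
  | negSucc m =>
    rw [zpow_negSucc, x_npow]
    ext <;> simp [Int.negSucc_eq] <;> push_cast <;> ring

lemma y_zpow (n : ℤ) : Heis.y ^ n = ⟨0, n, 0⟩ := by
  cases n with
  | ofNat m => rw [Int.ofNat_eq_natCast, zpow_natCast, y_npow]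
  | negSucc m =>
    rw [zpow_negSucc, y_npow]
    ext <;> simp [Int.negSucc_eq] <;> push_cast <;> ring

lemma z_zpow (n : ℤ) : Heis.z ^ n = ⟨0, 0, n⟩ := by
  cases n with
  | ofNat m => rw [Int.ofNat_eq_natCast, zpow_natCast, z_npow]
  | negSucc m =>
    rw [zpow_negSucc, z_npow]
    ext <;> simp [Int.negSucc_eq] <;> push_cast <;> ring

lemma z_decomp (g : Heis) :
    g = Heis.z ^ (g.c - g.a * g.b) * Heis.x ^ g.a * Heis.y ^ g.b := by
  rw [z_zpow, x_zpow, y_zpow]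
  ext <;> simp <;> ring

end HeisAux


/-- For the integer Heisenberg group, if `ζ` and `ζ'` are roots of unity of coprime
orders, then `V_ζ ⊗ V_{ζ'} ≅ V_{ζζ'}` — where `V_ξ` is characterized as the irreducible
representation of dimension `|ξ|` on which `z` acts by the scalar `ξ` and on which `x`
and `y` both have eigenvalue `1`.  In particular `dim (V_ζ ⊗ V_{ζ'}) = |ζ|·|ζ'| = |ζζ'|
= dim V_{ζζ'}`. -/
theorem stmt_14 (ζ ζ' : ℂˣ) (hζ : IsOfFinOrder ζ) (hζ' : IsOfFinOrder ζ')
    (hcop : (orderOf ζ).Coprime (orderOf ζ'))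
    (V V' V'' : Type) [AddCommGroup V] [Module ℂ V] [FiniteDimensional ℂ V]
    [AddCommGroup V'] [Module ℂ V'] [FiniteDimensional ℂ V']
    [AddCommGroup V''] [Module ℂ V''] [FiniteDimensional ℂ V'']
    (ρ : Representation ℂ Heis V) (ρ' : Representation ℂ Heis V')
    (ρ'' : Representation ℂ Heis V'')
    (hirr : IsIrred ρ) (hirr' : IsIrred ρ') (hirr'' : IsIrred ρ'')
    (hz : ρ Heis.z = (ζ : ℂ) • (1 : Module.End ℂ V))
    (hz' : ρ' Heis.z = (ζ' : ℂ) • (1 : Module.End ℂ V'))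
    (hz'' : ρ'' Heis.z = ((ζ * ζ' : ℂˣ) : ℂ) • (1 : Module.End ℂ V''))
    (hdim : Module.finrank ℂ V = orderOf ζ)
    (hdim' : Module.finrank ℂ V' = orderOf ζ')
    (hdim'' : Module.finrank ℂ V'' = orderOf (ζ * ζ'))
    (hx : Module.End.HasEigenvalue (ρ Heis.x) 1)
    (hy : Module.End.HasEigenvalue (ρ Heis.y) 1)
    (hx' : Module.End.HasEigenvalue (ρ' Heis.x) 1)
    (hy' : Module.End.HasEigenvalue (ρ' Heis.y) 1)
    (hx'' : Module.End.HasEigenvalue (ρ'' Heis.x) 1)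
    (hy'' : Module.End.HasEigenvalue (ρ'' Heis.y) 1) :
    orderOf (ζ * ζ') = orderOf ζ * orderOf ζ' ∧
    Module.finrank ℂ (V ⊗[ℂ] V') = orderOf ζ * orderOf ζ' ∧
    ∃ e : (V ⊗[ℂ] V') ≃ₗ[ℂ] V'',
      ∀ g : Heis,
        e.toLinearMap ∘ₗ TensorProduct.map (ρ g) (ρ' g) = (ρ'' g) ∘ₗ e.toLinearMap := by
  have r0 : 0 < orderOf ζ := hζ.orderOf_pos
  have s0 : 0 < orderOf ζ' := hζ'.orderOf_pos
  haveI : NeZero (orderOf ζ) := ⟨r0.ne'⟩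
  haveI : NeZero (orderOf ζ') := ⟨s0.ne'⟩
  have horder : orderOf (ζ * ζ') = orderOf ζ * orderOf ζ' :=
    (Commute.all ζ ζ').orderOf_mul_eq_mul_orderOf_of_coprime hcop
  have hfinrank : Module.finrank ℂ (V ⊗[ℂ] V') = orderOf ζ * orderOf ζ' := by
    rw [Module.finrank_tensorProduct, hdim, hdim']
  refine ⟨horder, hfinrank, ?_⟩
  obtain ⟨w, hwx, hwy⟩ := HeisAux.structure_lemma ζ (orderOf ζ) rfl r0 V ρ hz hdim hx hy
  obtain ⟨w', hwx', hwy'⟩ := HeisAux.structure_lemma ζ' (orderOf ζ') rfl s0 V' ρ' hz' hdim' hx' hy'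
  obtain ⟨w'', hwx'', hwy''⟩ := HeisAux.structure_lemma (ζ * ζ') (orderOf ζ * orderOf ζ')
    horder (by positivity) V'' ρ'' hz'' (hdim''.trans horder) hx'' hy''
  set crt := ZMod.chineseRemainder hcop with hcrtdef
  set φ : ZMod (orderOf ζ) × ZMod (orderOf ζ') ≃ ZMod (orderOf ζ * orderOf ζ') :=
    crt.symm.toEquiv with hφdef
  -- forward map of crt is the double cast
  have hcrt : ∀ m : ZMod (orderOf ζ * orderOf ζ'),
      crt m = ((m.val : ZMod (orderOf ζ)), (m.val : ZMod (orderOf ζ'))) := by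
    intro m
    haveI : NeZero (orderOf ζ * orderOf ζ') := ⟨by positivity⟩
    have h0 : crt m = ZMod.castHom
        (show Nat.lcm (orderOf ζ) (orderOf ζ') ∣ orderOf ζ * orderOf ζ' by
          simp [Nat.lcm_dvd_iff])
        (ZMod (orderOf ζ) × ZMod (orderOf ζ')) m := rfl
    rw [h0, ZMod.castHom_apply]
    refine Prod.ext ?_ ?_
    · rw [Prod.fst_zmod_cast, ← ZMod.natCast_val]
    · rw [Prod.snd_zmod_cast, ← ZMod.natCast_val]
  have hφcast : ∀ (k : ZMod (orderOf ζ)) (j : ZMod (orderOf ζ')),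
      (((φ (k, j)).val : ZMod (orderOf ζ)) = k ∧ ((φ (k, j)).val : ZMod (orderOf ζ')) = j) := by
    intro k j
    have h1 : crt (φ (k, j)) = (k, j) := crt.apply_symm_apply (k, j)
    rw [hcrt] at h1
    exact ⟨congrArg Prod.fst h1, congrArg Prod.snd h1⟩
  -- the additive shift
  have hφadd : ∀ (k : ZMod (orderOf ζ)) (j : ZMod (orderOf ζ')),
      φ (k + 1, j + 1) = φ (k, j) + 1 := by
    intro k j
    have h1 : ((k + 1 : ZMod (orderOf ζ)), (j + 1 : ZMod (orderOf ζ'))) =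
        ((k, j) + 1 : ZMod (orderOf ζ) × ZMod (orderOf ζ')) := by
      simp [Prod.ext_iff]
    show crt.symm _ = crt.symm _ + 1
    rw [h1, map_add, map_one]
  -- the eigenvalue identity
  have hφpow : ∀ (k : ZMod (orderOf ζ)) (j : ZMod (orderOf ζ')),
      (((ζ * ζ' : ℂˣ) : ℂ) ^ (ZMod.val (φ (k, j))))⁻¹ =
        (((ζ : ℂ) ^ (ZMod.val k))⁻¹) * (((ζ' : ℂ) ^ (ZMod.val j))⁻¹) := by
    intro k j
    set m := φ (k, j) with hm
    have h1 : ζ ^ (ZMod.val m) = ζ ^ (ZMod.val k) := by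
      have : ZMod.val k = ZMod.val m % orderOf ζ := by
        rw [← (hφcast k j).1, ZMod.val_natCast]
      rw [this, pow_mod_orderOf]
    have h2 : ζ' ^ (ZMod.val m) = ζ' ^ (ZMod.val j) := by
      have : ZMod.val j = ZMod.val m % orderOf ζ' := by
        rw [← (hφcast k j).2, ZMod.val_natCast]
      rw [this, pow_mod_orderOf]
    have h3 : ((ζ * ζ' : ℂˣ) : ℂ) ^ (ZMod.val m) =
        ((ζ : ℂ) ^ (ZMod.val k)) * ((ζ' : ℂ) ^ (ZMod.val j)) := by
      rw [Units.val_mul, mul_pow]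
      congr 1
      · rw [← Units.val_pow_eq_pow_val, ← Units.val_pow_eq_pow_val, h1]
      · rw [← Units.val_pow_eq_pow_val, ← Units.val_pow_eq_pow_val, h2]
    rw [h3, mul_inv]
  -- the equivalence
  set e : (V ⊗[ℂ] V') ≃ₗ[ℂ] V'' := (w.tensorProduct w').equiv w'' φ with he
  have heapp : ∀ (k : ZMod (orderOf ζ)) (j : ZMod (orderOf ζ')),
      e (w k ⊗ₜ[ℂ] w' j) = w'' (φ (k, j)) := by
    intro k j
    rw [he, ← Basis.tensorProduct_apply, Basis.equiv_apply]
  refine ⟨e, ?_⟩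
  -- the set of g for which equivariance holds is a subgroup
  set P : Heis → Prop := fun g =>
    e.toLinearMap ∘ₗ TensorProduct.map (ρ g) (ρ' g) = (ρ'' g) ∘ₗ e.toLinearMap with hP
  have Pone : P 1 := by
    rw [hP]
    simp only [map_one, Module.End.one_eq_id, TensorProduct.map_id]
    ext t <;> rfl
  have Pmul : ∀ g h : Heis, P g → P h → P (g * h) := by
    intro g h pg ph
    rw [hP]
    simp only
    have h1 : TensorProduct.map (ρ (g * h)) (ρ' (g * h)) =
        TensorProduct.map (ρ g) (ρ' g) ∘ₗ TensorProduct.map (ρ h) (ρ' h) := by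
      rw [map_mul, map_mul, Module.End.mul_eq_comp, Module.End.mul_eq_comp,
        TensorProduct.map_comp]
    rw [h1, ← LinearMap.comp_assoc, pg, LinearMap.comp_assoc, ph, ← LinearMap.comp_assoc,
      map_mul, Module.End.mul_eq_comp]
  have Pinv : ∀ g : Heis, P g → P g⁻¹ := by
    intro g pg
    rw [hP] at pg ⊢
    simp only at pg ⊢
    have h1 : TensorProduct.map (ρ g) (ρ' g) ∘ₗ TensorProduct.map (ρ g⁻¹) (ρ' g⁻¹) =
        LinearMap.id := by
      rw [← TensorProduct.map_comp, ← Module.End.mul_eq_comp, ← Module.End.mul_eq_comp,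
        ← map_mul, ← map_mul, mul_inv_cancel, map_one, map_one]
      simp only [Module.End.one_eq_id, TensorProduct.map_id]
    have h2 : (ρ'' g⁻¹) ∘ₗ (ρ'' g) = LinearMap.id := by
      rw [← Module.End.mul_eq_comp, ← map_mul, inv_mul_cancel, map_one]
      rfl
    calc e.toLinearMap ∘ₗ TensorProduct.map (ρ g⁻¹) (ρ' g⁻¹)
        = ((ρ'' g⁻¹) ∘ₗ (ρ'' g)) ∘ₗ e.toLinearMap ∘ₗ TensorProduct.map (ρ g⁻¹) (ρ' g⁻¹) := by
          rw [h2]; ext t; rfl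
      _ = (ρ'' g⁻¹) ∘ₗ (((ρ'' g) ∘ₗ e.toLinearMap) ∘ₗ TensorProduct.map (ρ g⁻¹) (ρ' g⁻¹)) := by
          rw [LinearMap.comp_assoc, LinearMap.comp_assoc]
      _ = (ρ'' g⁻¹) ∘ₗ ((e.toLinearMap ∘ₗ TensorProduct.map (ρ g) (ρ' g)) ∘ₗ
            TensorProduct.map (ρ g⁻¹) (ρ' g⁻¹)) := by rw [pg]
      _ = (ρ'' g⁻¹) ∘ₗ (e.toLinearMap ∘ₗ (TensorProduct.map (ρ g) (ρ' g) ∘ₗ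
            TensorProduct.map (ρ g⁻¹) (ρ' g⁻¹))) := by rw [LinearMap.comp_assoc]
      _ = (ρ'' g⁻¹) ∘ₗ e.toLinearMap := by rw [h1]; rfl
  have Px : P Heis.x := by
    rw [hP]
    simp only
    apply (w.tensorProduct w').ext
    rintro ⟨k, j⟩
    rw [Basis.tensorProduct_apply']
    simp only [LinearMap.comp_apply, TensorProduct.map_tmul, LinearEquiv.coe_coe]
    rw [hwx, hwx', heapp, heapp, hwx'', hφadd]
  have Py : P Heis.y := by
    rw [hP]
    simp only
    apply (w.tensorProduct w').ext
    rintro ⟨k, j⟩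
    rw [Basis.tensorProduct_apply']
    simp only [LinearMap.comp_apply, TensorProduct.map_tmul, LinearEquiv.coe_coe]
    rw [hwy, hwy', heapp, hwy'', ← TensorProduct.smul_tmul', TensorProduct.tmul_smul,
      map_smul, map_smul, heapp, smul_smul, hφpow]
  have Pz : P Heis.z := by
    rw [hP]
    simp only
    apply (w.tensorProduct w').ext
    rintro ⟨k, j⟩
    rw [Basis.tensorProduct_apply']
    simp only [LinearMap.comp_apply, TensorProduct.map_tmul, LinearEquiv.coe_coe, hz, hz', hz'',
      LinearMap.smul_apply, Module.End.one_apply]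
    rw [← TensorProduct.smul_tmul', TensorProduct.tmul_smul, map_smul, map_smul, smul_smul,
      Units.val_mul]
  set S : Subgroup Heis :=
    { carrier := {g | P g}
      mul_mem' := fun hg hh => Pmul _ _ hg hh
      one_mem' := Pone
      inv_mem' := fun hg => Pinv _ hg } with hS
  intro g
  have hmem : g ∈ S := by
    have h1 : Heis.z ^ (g.c - g.a * g.b) * Heis.x ^ g.a * Heis.y ^ g.b ∈ S :=
      S.mul_mem (S.mul_mem (S.zpow_mem Pz _) (S.zpow_mem Px _)) (S.zpow_mem Py _)
    rwa [← HeisAux.z_decomp g] at h1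
  exact hmem
end

section
/- Let A be the graded-commutative ring with A₀ = ⊕_{ζ∈μ_∞} ℤ·a_ζ, A₁ = ⊕_{ζ} (ℤ·b_ζ ⊕ ℤ·c_ζ), A₂ = ⊕_{ζ} ℤ·d_ζ, with products a_ζ a_{ζ'} = (|ζ||ζ'|/|ζζ'|) a_{ζζ'}, a_ζ b_{ζ'} = |ζ| b_{ζζ'}, a_ζ c_{ζ'} = |ζ| c_{ζζ'}, a_ζ d_{ζ'} = (|ζ||ζζ'|/|ζ'|) d_{ζζ'}, b_ζ c_{ζ'} = |ζζ'| d_{ζζ'}. Then these products are well-defined (the coefficients |ζ||ζ'|/|ζζ'| and |ζ||ζζ'|/|ζ'| are positive integers) and make A an associative graded-commutative ring with unit a₁. -/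
/-- The group `μ_∞` of all complex roots of unity. -/
def muInf : Subgroup ℂˣ where
  carrier := {z | ∃ n : ℕ, 0 < n ∧ z ^ n = 1}
  one_mem' := ⟨1, one_pos, one_pow _⟩
  mul_mem' := by
    rintro a b ⟨n, hn, ha⟩ ⟨m, hm, hb⟩
    exact ⟨n * m, Nat.mul_pos hn hm, by
      rw [mul_pow, pow_mul, ha, one_pow, one_mul, mul_comm n, pow_mul, hb, one_pow]⟩
  inv_mem' := by
    rintro a ⟨n, hn, ha⟩
    exact ⟨n, hn, by rw [inv_pow, ha, inv_one]⟩

/-- The underlying `ℤ`-module of the graded ring `A = H_*(Irr H)`, with components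
`(deg 0, deg 1 "b"-part, deg 1 "c"-part, deg 2)`, each free on `μ_∞`. -/
abbrev GrA : Type := (muInf →₀ ℤ) × (muInf →₀ ℤ) × (muInf →₀ ℤ) × (muInf →₀ ℤ)

/-- Convolution product on `μ_∞ →₀ ℤ` twisted by structure constants `c`. -/
noncomputable def conv (c : muInf → muInf → ℤ) (f g : muInf →₀ ℤ) : muInf →₀ ℤ :=
  f.sum fun ζ u => g.sum fun ζ' v => Finsupp.single (ζ * ζ') (u * v * c ζ ζ')

/-- The structure constant `|ζ||ζ'|/|ζζ'|` for `a_ζ a_{ζ'}`. -/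
noncomputable def n0 (ζ ζ' : muInf) : ℤ := ((orderOf ζ * orderOf ζ') / orderOf (ζ * ζ') : ℕ)

/-- The structure constant `|ζ||ζζ'|/|ζ'|` for `a_ζ d_{ζ'}`. -/
noncomputable def nad (ζ ζ' : muInf) : ℤ := ((orderOf ζ * orderOf (ζ * ζ')) / orderOf ζ' : ℕ)

/-- The multiplication of the graded ring `A`:
`a_ζ a_{ζ'} = (|ζ||ζ'|/|ζζ'|) a_{ζζ'}`, `a_ζ b_{ζ'} = |ζ| b_{ζζ'}`,
`a_ζ c_{ζ'} = |ζ| c_{ζζ'}`, `a_ζ d_{ζ'} = (|ζ||ζζ'|/|ζ'|) d_{ζζ'}`,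
`b_ζ c_{ζ'} = |ζζ'| d_{ζζ'}`, with degree-1 elements anticommuting and squaring to
zero, and even elements central. -/
noncomputable def grMul (x y : GrA) : GrA :=
  ( conv n0 x.1 y.1
  , conv (fun ζ _ => (orderOf ζ : ℤ)) x.1 y.2.1
      + conv (fun _ ζ' => (orderOf ζ' : ℤ)) x.2.1 y.1
  , conv (fun ζ _ => (orderOf ζ : ℤ)) x.1 y.2.2.1
      + conv (fun _ ζ' => (orderOf ζ' : ℤ)) x.2.2.1 y.1
  , conv nad x.1 y.2.2.2 + conv (fun ζ ζ' => nad ζ' ζ) x.2.2.2 y.1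
      + conv (fun ζ ζ' => (orderOf (ζ * ζ') : ℤ)) x.2.1 y.2.2.1
      - conv (fun ζ ζ' => (orderOf (ζ * ζ') : ℤ)) x.2.2.1 y.2.1 )

/-- The unit `a₁`. -/
noncomputable def grOne : GrA := (Finsupp.single 1 1, 0, 0, 0)

lemma muInf_isOfFinOrder (ζ : muInf) : IsOfFinOrder ζ := by
  obtain ⟨n, hn, h⟩ := ζ.2
  refine isOfFinOrder_iff_pow_eq_one.mpr ⟨n, hn, ?_⟩
  exact Subtype.ext (by push_cast; exact h)

lemma opos (ζ : muInf) : 0 < orderOf ζ := (muInf_isOfFinOrder ζ).orderOf_pos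

lemma dvd1 (ζ ζ' : muInf) : orderOf (ζ * ζ') ∣ orderOf ζ * orderOf ζ' :=
  Commute.orderOf_mul_dvd_mul_orderOf (mul_comm ζ ζ')

lemma dvd2 (ζ ζ' : muInf) : orderOf ζ' ∣ orderOf ζ * orderOf (ζ * ζ') := by
  have h := dvd1 ζ⁻¹ (ζ * ζ')
  rw [inv_mul_cancel_left, orderOf_inv] at h
  exact h

lemma oqne (ζ : muInf) : ((orderOf ζ : ℕ) : ℚ) ≠ 0 := Nat.cast_ne_zero.mpr (opos ζ).ne'

lemma n0q (ζ ζ' : muInf) :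
    ((n0 ζ ζ' : ℤ) : ℚ) = (orderOf ζ : ℚ) * (orderOf ζ' : ℚ) / (orderOf (ζ * ζ') : ℚ) := by
  unfold n0
  rw [Int.cast_natCast, Nat.cast_div (dvd1 ζ ζ') (oqne _)]
  push_cast; ring

lemma nadq (ζ ζ' : muInf) :
    ((nad ζ ζ' : ℤ) : ℚ) = (orderOf ζ : ℚ) * (orderOf (ζ * ζ') : ℚ) / (orderOf ζ' : ℚ) := by
  unfold nad
  rw [Int.cast_natCast, Nat.cast_div (dvd2 ζ ζ') (oqne _)]
  push_cast; ring

lemma cast_helper {m n : ℤ} (h : (m : ℚ) = n) : m = n := by exact_mod_cast h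

-- cocycle identities
lemma cocA (ζ ζ' ζ'' : muInf) :
    n0 ζ ζ' * n0 (ζ * ζ') ζ'' = n0 ζ' ζ'' * n0 ζ (ζ' * ζ'') := by
  apply cast_helper
  push_cast [n0q]
  simp only [mul_comm, mul_left_comm, mul_assoc]
  have := oqne ζ; have := oqne ζ'; have := oqne ζ''; have := oqne (ζ * ζ'); have := oqne (ζ' * ζ'')
  have := oqne (ζ * (ζ' * ζ'')); have := oqne (ζ * ζ' * ζ'')
  field_simp [oqne] <;> ring

lemma cocT1 (ζ ζ' ζ'' : muInf) :
    n0 ζ ζ' * (orderOf (ζ * ζ') : ℤ) = (orderOf ζ' : ℤ) * (orderOf ζ : ℤ) := by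
  apply cast_helper
  push_cast [n0q]
  have := oqne ζ; have := oqne ζ'; have := oqne ζ''; have := oqne (ζ * ζ'); have := oqne (ζ' * ζ'')
  have := oqne (ζ * (ζ' * ζ'')); have := oqne (ζ * ζ' * ζ'')
  field_simp [oqne] <;> ring

lemma cocT3 (ζ ζ' ζ'' : muInf) :
    (orderOf ζ' : ℤ) * (orderOf ζ'' : ℤ) = n0 ζ' ζ'' * (orderOf (ζ' * ζ'') : ℤ) := by
  apply cast_helper
  push_cast [n0q]
  have := oqne ζ; have := oqne ζ'; have := oqne ζ''; have := oqne (ζ * ζ'); have := oqne (ζ' * ζ'')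
  have := oqne (ζ * (ζ' * ζ'')); have := oqne (ζ * ζ' * ζ'')
  field_simp [oqne] <;> ring

lemma cocD1 (ζ ζ' ζ'' : muInf) :
    n0 ζ ζ' * nad (ζ * ζ') ζ'' = nad ζ' ζ'' * nad ζ (ζ' * ζ'') := by
  apply cast_helper
  push_cast [n0q, nadq]
  simp only [mul_comm, mul_left_comm, mul_assoc]
  have := oqne ζ; have := oqne ζ'; have := oqne ζ''; have := oqne (ζ * ζ'); have := oqne (ζ' * ζ'')
  have := oqne (ζ * (ζ' * ζ'')); have := oqne (ζ * ζ' * ζ'')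
  field_simp [oqne] <;> ring

lemma cocD2 (ζ ζ' ζ'' : muInf) :
    nad ζ ζ' * nad ζ'' (ζ * ζ') = nad ζ'' ζ' * nad ζ (ζ' * ζ'') := by
  apply cast_helper
  push_cast [nadq]
  simp only [mul_comm, mul_left_comm, mul_assoc]
  have := oqne ζ; have := oqne ζ'; have := oqne ζ''; have := oqne (ζ * ζ'); have := oqne (ζ' * ζ'')
  have := oqne (ζ * (ζ' * ζ'')); have := oqne (ζ * ζ' * ζ'')
  field_simp [oqne] <;> ring

lemma cocD3 (ζ ζ' ζ'' : muInf) :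
    nad ζ' ζ * nad ζ'' (ζ * ζ') = n0 ζ' ζ'' * nad (ζ' * ζ'') ζ := by
  apply cast_helper
  push_cast [n0q, nadq]
  simp only [mul_comm, mul_left_comm, mul_assoc]
  have := oqne ζ; have := oqne ζ'; have := oqne ζ''; have := oqne (ζ * ζ'); have := oqne (ζ' * ζ'')
  have := oqne (ζ * (ζ' * ζ'')); have := oqne (ζ * ζ' * ζ'')
  field_simp [oqne] <;> ring

lemma cocD4 (ζ ζ' ζ'' : muInf) :
    (orderOf (ζ * ζ') : ℤ) * nad ζ'' (ζ * ζ') = (orderOf ζ'' : ℤ) * (orderOf (ζ * (ζ' * ζ'')) : ℤ) := by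
  apply cast_helper
  push_cast [nadq]
  simp only [mul_comm, mul_left_comm, mul_assoc]
  have := oqne ζ; have := oqne ζ'; have := oqne ζ''; have := oqne (ζ * ζ'); have := oqne (ζ' * ζ'')
  have := oqne (ζ * (ζ' * ζ'')); have := oqne (ζ * ζ' * ζ'')
  field_simp [oqne] <;> ring

lemma cocD6 (ζ ζ' ζ'' : muInf) :
    (orderOf ζ : ℤ) * (orderOf (ζ * ζ' * ζ'') : ℤ) = (orderOf (ζ' * ζ'') : ℤ) * nad ζ (ζ' * ζ'') := by
  apply cast_helper
  push_cast [nadq]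
  simp only [mul_comm, mul_left_comm, mul_assoc]
  have := oqne ζ; have := oqne ζ'; have := oqne ζ''; have := oqne (ζ * ζ'); have := oqne (ζ' * ζ'')
  have := oqne (ζ * (ζ' * ζ'')); have := oqne (ζ * ζ' * ζ'')
  field_simp [oqne] <;> ring

-- conv machinery
lemma conv_zero_left (c : muInf → muInf → ℤ) (g : muInf →₀ ℤ) : conv c 0 g = 0 := by
  simp [conv]

lemma conv_zero_right (c : muInf → muInf → ℤ) (f : muInf →₀ ℤ) : conv c f 0 = 0 := by
  simp [conv]

lemma conv_add_left (c : muInf → muInf → ℤ) (f f' g : muInf →₀ ℤ) :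
    conv c (f + f') g = conv c f g + conv c f' g := by
  unfold conv
  refine Finsupp.sum_add_index' (fun a => by simp) (fun a b₁ b₂ => ?_)
  rw [← Finsupp.sum_add]
  refine Finsupp.sum_congr fun ζ' _ => ?_
  rw [add_mul, add_mul, Finsupp.single_add]

lemma conv_add_right (c : muInf → muInf → ℤ) (f g g' : muInf →₀ ℤ) :
    conv c f (g + g') = conv c f g + conv c f g' := by
  unfold conv
  rw [← Finsupp.sum_add]
  refine Finsupp.sum_congr fun ζ hζ => ?_
  refine Finsupp.sum_add_index' (fun a => by simp) (fun a b₁ b₂ => ?_)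
  simp [mul_add, add_mul, Finsupp.single_add]

lemma conv_neg_left (c : muInf → muInf → ℤ) (f g : muInf →₀ ℤ) :
    conv c (-f) g = -conv c f g := by
  have h := conv_add_left c (-f) f g
  rw [neg_add_cancel, conv_zero_left] at h
  exact eq_neg_of_add_eq_zero_left h.symm

lemma conv_neg_right (c : muInf → muInf → ℤ) (f g : muInf →₀ ℤ) :
    conv c f (-g) = -conv c f g := by
  have h := conv_add_right c f (-g) g
  rw [neg_add_cancel, conv_zero_right] at h
  exact eq_neg_of_add_eq_zero_left h.symm

lemma conv_sub_left (c : muInf → muInf → ℤ) (f f' g : muInf →₀ ℤ) :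
    conv c (f - f') g = conv c f g - conv c f' g := by
  rw [sub_eq_add_neg, conv_add_left, conv_neg_left, sub_eq_add_neg]

lemma conv_sub_right (c : muInf → muInf → ℤ) (f g g' : muInf →₀ ℤ) :
    conv c f (g - g') = conv c f g - conv c f g' := by
  rw [sub_eq_add_neg, conv_add_right, conv_neg_right, sub_eq_add_neg]

lemma conv_single_single (c : muInf → muInf → ℤ) (ζ ζ' : muInf) (u v : ℤ) :
    conv c (Finsupp.single ζ u) (Finsupp.single ζ' v)
      = Finsupp.single (ζ * ζ') (u * v * c ζ ζ') := by
  unfold conv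
  rw [Finsupp.sum_single_index (by simp), Finsupp.sum_single_index (by simp)]

lemma conv_comm (c c' : muInf → muInf → ℤ) (hc : ∀ ζ ζ', c ζ ζ' = c' ζ' ζ)
    (f g : muInf →₀ ℤ) : conv c f g = conv c' g f := by
  unfold conv
  rw [Finsupp.sum_comm]
  refine Finsupp.sum_congr fun ζ' _ => Finsupp.sum_congr fun ζ _ => ?_
  rw [mul_comm ζ ζ', hc ζ ζ', mul_comm (f ζ) (g ζ')]

lemma conv_one_left (c : muInf → muInf → ℤ) (hc : ∀ ζ', c 1 ζ' = 1) (f : muInf →₀ ℤ) :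
    conv c (Finsupp.single 1 1) f = f := by
  unfold conv
  rw [Finsupp.sum_single_index (by simp)]
  simp [hc, Finsupp.sum_single]

lemma conv_one_right (c : muInf → muInf → ℤ) (hc : ∀ ζ, c ζ 1 = 1) (f : muInf →₀ ℤ) :
    conv c f (Finsupp.single 1 1) = f := by
  unfold conv
  have h : ∀ ζ u, ((Finsupp.single (1 : muInf) (1 : ℤ)).sum fun ζ' v =>
      Finsupp.single (ζ * ζ') (u * v * c ζ ζ')) = Finsupp.single ζ u := by
    intro ζ u
    rw [Finsupp.sum_single_index (by simp)]
    simp [hc]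
  calc f.sum (fun ζ u => (Finsupp.single (1 : muInf) (1 : ℤ)).sum fun ζ' v =>
          Finsupp.single (ζ * ζ') (u * v * c ζ ζ'))
      = f.sum Finsupp.single := Finsupp.sum_congr fun ζ _ => h ζ (f ζ)
    _ = f := Finsupp.sum_single f

lemma conv_assoc (c1 c2 c3 c4 : muInf → muInf → ℤ)
    (hc : ∀ ζ ζ' ζ'' : muInf, c1 ζ ζ' * c2 (ζ * ζ') ζ'' = c3 ζ' ζ'' * c4 ζ (ζ' * ζ''))
    (f g h : muInf →₀ ℤ) :
    conv c2 (conv c1 f g) h = conv c4 f (conv c3 g h) := by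
  induction f using Finsupp.induction with
  | zero => simp [conv_zero_left]
  | single_add ζ u f hζ hu ihf =>
    rw [conv_add_left, conv_add_left, conv_add_left, ihf, add_left_inj]
    clear ihf hu hζ
    induction g using Finsupp.induction with
    | zero => simp [conv_zero_left, conv_zero_right]
    | single_add ζ' v g hζ' hv ihg =>
      rw [conv_add_right, conv_add_left, conv_add_left, conv_add_right, ihg, add_left_inj]
      clear ihg hv hζ'
      induction h using Finsupp.induction with
      | zero => simp [conv_zero_right]
      | single_add ζ'' w h hζ'' hw ihh =>
        rw [conv_add_right, conv_add_right, conv_add_right, ihh, add_left_inj]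
        rw [conv_single_single, conv_single_single, conv_single_single, conv_single_single,
          mul_assoc ζ ζ' ζ'']
        exact congrArg (Finsupp.single _) (by linear_combination (u * v * w) * hc ζ ζ' ζ'')

lemma cocD7 (ζ ζ' ζ'' : muInf) :
    (orderOf ζ' : ℤ) * (orderOf (ζ * ζ' * ζ'') : ℤ)
      = (orderOf ζ' : ℤ) * (orderOf (ζ * (ζ' * ζ'')) : ℤ) := by rw [mul_assoc]

lemma n0_one_left (ζ : muInf) : n0 1 ζ = 1 := by
  simp [n0, Nat.div_self (opos ζ)]

lemma n0_one_right (ζ : muInf) : n0 ζ 1 = 1 := by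
  simp [n0, Nat.div_self (opos ζ)]

lemma nad_one_left (ζ : muInf) : nad 1 ζ = 1 := by
  simp [nad, Nat.div_self (opos ζ)]

lemma n0_comm (ζ ζ' : muInf) : n0 ζ ζ' = n0 ζ' ζ := by
  simp [n0, mul_comm]

lemma ord_symm (ζ ζ' : muInf) :
    ((orderOf (ζ * ζ') : ℕ) : ℤ) = ((orderOf (ζ' * ζ) : ℕ) : ℤ) := by rw [mul_comm]

/-- The products of the graded ring `A` are well defined (the structure constants
`|ζ||ζ'|/|ζζ'|` and `|ζ||ζζ'|/|ζ'|` are positive integers) and make `A` an associative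
graded-commutative ring with unit `a₁`: multiplication is bilinear, associative, unital,
even elements are central, and odd (degree-1) elements anticommute. -/
theorem stmt_16 :
    -- well-definedness of the structure constants: exact divisibility and positivity
    (∀ ζ ζ' : muInf, orderOf (ζ * ζ') ∣ orderOf ζ * orderOf ζ') ∧
    (∀ ζ ζ' : muInf, orderOf ζ' ∣ orderOf ζ * orderOf (ζ * ζ')) ∧
    (∀ ζ ζ' : muInf, 0 < n0 ζ ζ' ∧ 0 < nad ζ ζ') ∧
    -- distributivity (bilinearity)
    (∀ x x' y : GrA, grMul (x + x') y = grMul x y + grMul x' y) ∧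
    (∀ x y y' : GrA, grMul x (y + y') = grMul x y + grMul x y') ∧
    -- associativity
    (∀ x y z : GrA, grMul (grMul x y) z = grMul x (grMul y z)) ∧
    -- unit
    (∀ x : GrA, grMul grOne x = x ∧ grMul x grOne = x) ∧
    -- graded commutativity: even elements are central …
    (∀ x y : GrA, x.2.1 = 0 → x.2.2.1 = 0 → grMul x y = grMul y x) ∧
    -- … and purely odd elements anticommute
    (∀ x y : GrA, x.1 = 0 → x.2.2.2 = 0 → y.1 = 0 → y.2.2.2 = 0 →
      grMul x y = -grMul y x) := by
  refine ⟨dvd1, dvd2, ?_, ?_, ?_, ?_, ?_, ?_, ?_⟩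
  · -- positivity
    intro ζ ζ'
    constructor
    · unfold n0
      exact_mod_cast Nat.div_pos
        (Nat.le_of_dvd (Nat.mul_pos (opos ζ) (opos ζ')) (dvd1 ζ ζ')) (opos (ζ * ζ'))
    · unfold nad
      exact_mod_cast Nat.div_pos
        (Nat.le_of_dvd (Nat.mul_pos (opos ζ) (opos (ζ * ζ'))) (dvd2 ζ ζ')) (opos ζ')
  · -- left distributivity
    intro x x' y
    refine Prod.ext ?_ (Prod.ext ?_ (Prod.ext ?_ ?_)) <;>
      simp only [grMul, Prod.fst_add, Prod.snd_add, conv_add_left] <;> abel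
  · -- right distributivity
    intro x y y'
    refine Prod.ext ?_ (Prod.ext ?_ (Prod.ext ?_ ?_)) <;>
      simp only [grMul, Prod.fst_add, Prod.snd_add, conv_add_right] <;> abel
  · -- associativity
    intro x y z
    refine Prod.ext ?_ (Prod.ext ?_ (Prod.ext ?_ ?_)) <;>
      simp only [grMul, conv_add_left, conv_add_right, conv_sub_left, conv_sub_right,
        conv_assoc n0 n0 n0 n0 cocA,
        conv_assoc n0 (fun ζ _ => (orderOf ζ : ℤ)) (fun ζ _ => (orderOf ζ : ℤ))
          (fun ζ _ => (orderOf ζ : ℤ)) cocT1,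
        conv_assoc (fun ζ _ => (orderOf ζ : ℤ)) (fun _ ζ' => (orderOf ζ' : ℤ))
          (fun _ ζ' => (orderOf ζ' : ℤ)) (fun ζ _ => (orderOf ζ : ℤ))
          (fun ζ _ ζ'' => mul_comm ((orderOf ζ : ℤ)) ((orderOf ζ'' : ℤ))),
        conv_assoc (fun _ ζ' => (orderOf ζ' : ℤ)) (fun _ ζ' => (orderOf ζ' : ℤ)) n0
          (fun _ ζ' => (orderOf ζ' : ℤ)) cocT3,
        conv_assoc n0 nad nad nad cocD1,
        conv_assoc nad (fun ζ ζ' => nad ζ' ζ) (fun ζ ζ' => nad ζ' ζ) nad cocD2,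
        conv_assoc (fun ζ ζ' => nad ζ' ζ) (fun ζ ζ' => nad ζ' ζ) n0
          (fun ζ ζ' => nad ζ' ζ) cocD3,
        conv_assoc (fun ζ ζ' => (orderOf (ζ * ζ') : ℤ)) (fun ζ ζ' => nad ζ' ζ)
          (fun _ ζ' => (orderOf ζ' : ℤ)) (fun ζ ζ' => (orderOf (ζ * ζ') : ℤ)) cocD4,
        conv_assoc (fun ζ _ => (orderOf ζ : ℤ)) (fun ζ ζ' => (orderOf (ζ * ζ') : ℤ))
          (fun ζ ζ' => (orderOf (ζ * ζ') : ℤ)) nad cocD6,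
        conv_assoc (fun _ ζ' => (orderOf ζ' : ℤ)) (fun ζ ζ' => (orderOf (ζ * ζ') : ℤ))
          (fun ζ _ => (orderOf ζ : ℤ)) (fun ζ ζ' => (orderOf (ζ * ζ') : ℤ)) cocD7] <;>
      abel
  · -- unit
    intro x
    constructor
    · refine Prod.ext ?_ (Prod.ext ?_ (Prod.ext ?_ ?_)) <;>
        simp only [grMul, grOne, conv_zero_left, conv_zero_right, add_zero, zero_add, sub_zero]
      · exact conv_one_left n0 n0_one_left x.1
      · exact conv_one_left _ (fun ζ' => by simp) x.2.1
      · exact conv_one_left _ (fun ζ' => by simp) x.2.2.1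
      · exact conv_one_left nad nad_one_left x.2.2.2
    · refine Prod.ext ?_ (Prod.ext ?_ (Prod.ext ?_ ?_)) <;>
        simp only [grMul, grOne, conv_zero_left, conv_zero_right, add_zero, zero_add, sub_zero]
      · exact conv_one_right n0 n0_one_right x.1
      · exact conv_one_right _ (fun ζ => by simp) x.2.1
      · exact conv_one_right _ (fun ζ => by simp) x.2.2.1
      · exact conv_one_right _ (fun ζ => nad_one_left ζ) x.2.2.2
  · -- even-central
    intro x y hb hc2
    refine Prod.ext ?_ (Prod.ext ?_ (Prod.ext ?_ ?_)) <;>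
      simp only [grMul, hb, hc2, conv_zero_left, conv_zero_right, add_zero, zero_add, sub_zero]
    · exact conv_comm n0 n0 n0_comm x.1 y.1
    · exact conv_comm _ _ (fun _ _ => rfl) x.1 y.2.1
    · exact conv_comm _ _ (fun _ _ => rfl) x.1 y.2.2.1
    · rw [conv_comm nad (fun ζ ζ' => nad ζ' ζ) (fun _ _ => rfl) x.1 y.2.2.2,
        conv_comm (fun ζ ζ' => nad ζ' ζ) nad (fun _ _ => rfl) x.2.2.2 y.1]
      abel
  · -- anticommutativity of odd elements
    intro x y h1 h4 k1 k4
    refine Prod.ext ?_ (Prod.ext ?_ (Prod.ext ?_ ?_)) <;>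
      simp only [grMul, h1, h4, k1, k4, conv_zero_left, conv_zero_right, add_zero, zero_add,
        sub_zero, zero_sub, Prod.fst_neg, Prod.snd_neg, neg_zero, neg_neg]
    · rw [conv_comm (fun ζ ζ' => (orderOf (ζ * ζ') : ℤ)) (fun ζ ζ' => (orderOf (ζ * ζ') : ℤ))
        ord_symm x.2.1 y.2.2.1,
        conv_comm (fun ζ ζ' => (orderOf (ζ * ζ') : ℤ)) (fun ζ ζ' => (orderOf (ζ * ζ') : ℤ))
        ord_symm x.2.2.1 y.2.1]
      abel
end
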